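/- For the map f of P^2 given in homogeneous coordinates by [z_1 : z_2 : z_3] ↦ [z_1(z_1 + 4z_2 + 2z_3) : 2z_1 z_2 + 3z_2^2 : 4z_1 z_3 + 5z_2 z_3 - z_3^2], the points [1:0:0], [1:1:0], [1:0:1], [5:-3:4] are fixed points, and in the affine chart z_1 = 1 the traces and determinants of I - Df at these points are respectively (t, d) = (-4, 3), (-3/5, -4/25), (4/3, 1/3), (9, -60). -/

import Mathlib

/-- The case-study map `f` of `ℙ²` in the affine chart `[1 : x : y]`:
`(x, y) ↦ ((2x + 3x²)/(1 + 4x + 2y), (4y + 5xy - y²)/(1 + 4x + 2y))`. -/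
noncomputable def caseF (v : ℂ × ℂ) : ℂ × ℂ :=
  ((2 * v.1 + 3 * v.1 ^ 2) / (1 + 4 * v.1 + 2 * v.2),
   (4 * v.2 + 5 * v.1 * v.2 - v.2 ^ 2) / (1 + 4 * v.1 + 2 * v.2))

/-- The matrix `I - Df(p)` of a self-map `F` of `ℂ²` at a point `p`. -/
noncomputable def IminusDf (F : ℂ × ℂ → ℂ × ℂ) (p : ℂ × ℂ) : Matrix (Fin 2) (Fin 2) ℂ :=
  !![1 - (fderiv ℂ F p (1, 0)).1, -(fderiv ℂ F p (0, 1)).1;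
     -(fderiv ℂ F p (1, 0)).2, 1 - (fderiv ℂ F p (0, 1)).2]

/-- Auxiliary: the explicit continuous linear map with matrix `!![a, b; c, d]`. -/
noncomputable def Lmap (a b c d : ℂ) : ℂ × ℂ →L[ℂ] ℂ × ℂ :=
  (a • ContinuousLinearMap.fst ℂ ℂ ℂ + b • ContinuousLinearMap.snd ℂ ℂ ℂ).prod
  (c • ContinuousLinearMap.fst ℂ ℂ ℂ + d • ContinuousLinearMap.snd ℂ ℂ ℂ)

lemma caseF_deriv (p : ℂ × ℂ) (hp : 1 + 4 * p.1 + 2 * p.2 ≠ 0) (a b c d : ℂ)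
    (ha : a = ((2+6*p.1)*(1+4*p.1+2*p.2) - 4*(2*p.1+3*p.1^2)) / (1 + 4*p.1 + 2*p.2)^2)
    (hb : b = -2*(2*p.1+3*p.1^2) / (1 + 4*p.1 + 2*p.2)^2)
    (hc : c = (5*p.2*(1+4*p.1+2*p.2) - 4*(4*p.2+5*p.1*p.2-p.2^2)) / (1 + 4*p.1 + 2*p.2)^2)
    (hd : d = ((4+5*p.1-2*p.2)*(1+4*p.1+2*p.2) - 2*(4*p.2+5*p.1*p.2-p.2^2)) / (1 + 4*p.1 + 2*p.2)^2) :
    HasFDerivAt caseF (Lmap a b c d) p := by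
  have hx : HasFDerivAt (fun v : ℂ × ℂ => v.1) (ContinuousLinearMap.fst ℂ ℂ ℂ) p := hasFDerivAt_fst
  have hy : HasFDerivAt (fun v : ℂ × ℂ => v.2) (ContinuousLinearMap.snd ℂ ℂ ℂ) p := hasFDerivAt_snd
  have hh : HasFDerivAt (fun v : ℂ × ℂ => 1 + 4 * v.1 + 2 * v.2) _ p :=
    ((hasFDerivAt_const (1:ℂ) p).add (hx.const_mul 4)).add (hy.const_mul 2)
  have hinv : HasFDerivAt (fun v : ℂ × ℂ => (1 + 4 * v.1 + 2 * v.2)⁻¹) _ p :=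
    (hasDerivAt_inv hp).comp_hasFDerivAt p hh
  have hg1 : HasFDerivAt (fun v : ℂ × ℂ => 2 * v.1 + 3 * (v.1 * v.1)) _ p :=
    (hx.const_mul 2).add ((hx.mul hx).const_mul 3)
  have hg2 : HasFDerivAt (fun v : ℂ × ℂ => 4 * v.2 + 5 * v.1 * v.2 - v.2 * v.2) _ p :=
    ((hy.const_mul 4).add (((hx.const_mul 5).mul hy))).sub (hy.mul hy)
  have key := HasFDerivAt.prodMk (hg1.mul hinv) (hg2.mul hinv)
  have hfun : caseF = fun v : ℂ × ℂ =>
      ((2 * v.1 + 3 * (v.1 * v.1)) * (1 + 4 * v.1 + 2 * v.2)⁻¹,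
       (4 * v.2 + 5 * v.1 * v.2 - v.2 * v.2) * (1 + 4 * v.1 + 2 * v.2)⁻¹) := by
    funext v; simp only [caseF, div_eq_mul_inv]; ring_nf
  rw [hfun]
  refine key.congr_fderiv ?_
  have hp2 : ((1 : ℂ) + 4 * p.1 + 2 * p.2)^2 ≠ 0 := pow_ne_zero _ hp
  refine ContinuousLinearMap.ext fun v => Prod.ext ?_ ?_
  · simp only [Lmap, ContinuousLinearMap.prod_apply, ContinuousLinearMap.add_apply,
      ContinuousLinearMap.smul_apply, ContinuousLinearMap.coe_fst', ContinuousLinearMap.coe_snd',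
      smul_eq_mul, ContinuousLinearMap.coe_smul', Pi.smul_apply, ContinuousLinearMap.zero_apply,
      ContinuousLinearMap.smulRight_apply, ContinuousLinearMap.sub_apply]
    rw [ha, hb]
    field_simp
    ring
  · simp only [Lmap, ContinuousLinearMap.prod_apply, ContinuousLinearMap.add_apply,
      ContinuousLinearMap.smul_apply, ContinuousLinearMap.coe_fst', ContinuousLinearMap.coe_snd',
      smul_eq_mul, ContinuousLinearMap.coe_smul', Pi.smul_apply, ContinuousLinearMap.zero_apply,
      ContinuousLinearMap.smulRight_apply, ContinuousLinearMap.sub_apply]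
    rw [hc, hd]
    field_simp
    ring

lemma IminusDf_eq (p : ℂ × ℂ) (a b c d : ℂ)
    (h : fderiv ℂ caseF p = Lmap a b c d) :
    IminusDf caseF p = !![1 - a, -b; -c, 1 - d] := by
  simp only [IminusDf, h, Lmap, ContinuousLinearMap.prod_apply, ContinuousLinearMap.add_apply,
    ContinuousLinearMap.smul_apply, ContinuousLinearMap.coe_fst', ContinuousLinearMap.coe_snd',
    smul_eq_mul]
  norm_num

/-- For the case-study map, the four points `(0,0), (1,0), (0,1), (-3/5, 4/5)`
(the affine images of `[1:0:0], [1:1:0], [1:0:1], [5:-3:4]`) are fixed, and the traces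
and determinants of `I - Df` there are `(-4,3), (-3/5,-4/25), (4/3,1/3), (9,-60)`. -/
theorem stmt_12 :
    (caseF (0, 0) = (0, 0) ∧
      (IminusDf caseF (0, 0)).trace = -4 ∧ (IminusDf caseF (0, 0)).det = 3) ∧
    (caseF (1, 0) = (1, 0) ∧
      (IminusDf caseF (1, 0)).trace = -3 / 5 ∧ (IminusDf caseF (1, 0)).det = -4 / 25) ∧
    (caseF (0, 1) = (0, 1) ∧
      (IminusDf caseF (0, 1)).trace = 4 / 3 ∧ (IminusDf caseF (0, 1)).det = 1 / 3) ∧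
    (caseF (-3 / 5, 4 / 5) = (-3 / 5, 4 / 5) ∧
      (IminusDf caseF (-3 / 5, 4 / 5)).trace = 9 ∧
      (IminusDf caseF (-3 / 5, 4 / 5)).det = -60) := by
  have h1 := IminusDf_eq (0, 0) 2 0 0 4
    ((caseF_deriv (0, 0) (by norm_num) 2 0 0 4 (by norm_num) (by norm_num) (by norm_num)
      (by norm_num)).fderiv)
  have h2 := IminusDf_eq (1, 0) (4/5) (-2/5) 0 (9/5)
    ((caseF_deriv (1, 0) (by norm_num) _ _ _ _ (by norm_num) (by norm_num) (by norm_num)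
      (by norm_num)).fderiv)
  have h3 := IminusDf_eq (0, 1) (2/3) 0 (1/3) 0
    ((caseF_deriv (0, 1) (by norm_num) _ _ _ _ (by norm_num) (by norm_num) (by norm_num)
      (by norm_num)).fderiv)
  have h4 := IminusDf_eq (-3/5, 4/5) 4 6 4 (-11)
    ((caseF_deriv (-3/5, 4/5) (by norm_num) _ _ _ _ (by norm_num) (by norm_num) (by norm_num)
      (by norm_num)).fderiv)
  refine ⟨⟨?_, ?_, ?_⟩, ⟨?_, ?_, ?_⟩, ⟨?_, ?_, ?_⟩, ⟨?_, ?_, ?_⟩⟩ <;>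
    simp only [caseF, h1, h2, h3, h4, Matrix.trace_fin_two_of, Matrix.det_fin_two_of,
      Prod.mk.injEq] <;> norm_num
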